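/- In the margin condition setting (see context), let d = d(μ;C*) and d̂ = d(μ̂;C*) be the nearest-center indices of μ and μ̂ under C*. Then there exists a constant c depending only on B, k, p, α and L such that 0 ≤ E[‖μ − c*_{d̂}‖₂² − ‖μ − c*_d‖₂²] ≤ c·( max_{a} ‖μ̂_a − μ_a‖_∞^{α+1} + κ^{-1}·max_{a} ( ‖μ̂_a − μ_a‖_∞ · E|μ̂_a − μ_a| ) ); that is, the expected excess squared distance incurred by selecting the nearest center according to μ̂ rather than μ is second order in the estimation error. -/

import Mathlib

open MeasureTheory

/-- `ζ_j(x) = min_{i≠j} ‖x − c*_i‖₂ − ‖x − c*_j‖₂`. -/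
noncomputable def zeta {p k : ℕ} (Cs : Fin k → EuclideanSpace ℝ (Fin p)) (j : Fin k)
    (x : EuclideanSpace ℝ (Fin p)) : ℝ :=
  (⨅ i : {i : Fin k // i ≠ j}, ‖x - Cs i.1‖) - ‖x - Cs j‖

/-- The margin neighborhood `N_{C*}(t) = ⋃_j {x ∈ V_j(C*) : |ζ_j(x)| ≤ t}`. -/
def marginSet {p k : ℕ} (Cs : Fin k → EuclideanSpace ℝ (Fin p)) (t : ℝ) :
    Set (EuclideanSpace ℝ (Fin p)) :=
  {x | ∃ j, (∀ i, ‖x - Cs j‖ ≤ ‖x - Cs i‖) ∧ |zeta Cs j x| ≤ t}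

/-- The essential supremum norm `‖f‖_∞` of a real random variable. -/
noncomputable def linf {Ω : Type*} {m : MeasurableSpace Ω} (P : Measure Ω) (f : Ω → ℝ) : ℝ :=
  essSup (fun ω => |f ω|) P

/-- The nearest-center index of `x` under the codebook `C`: the smallest `j`
minimizing `‖x − c_j‖₂`. -/
noncomputable def nearestIdx {p k : ℕ} (hk : 0 < k)
    (C : Fin k → EuclideanSpace ℝ (Fin p)) (x : EuclideanSpace ℝ (Fin p)) : Fin k :=
  (Finset.univ.filter fun j => ∀ m, ‖x - C j‖ ≤ ‖x - C m‖).min'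
    (by
      obtain ⟨j, -, hj⟩ :=
        Finset.exists_min_image (Finset.univ : Finset (Fin k)) (fun j => ‖x - C j‖)
          ⟨⟨0, hk⟩, Finset.mem_univ _⟩
      exact ⟨j, Finset.mem_filter.2 ⟨Finset.mem_univ _, fun m => hj m (Finset.mem_univ m)⟩⟩)

lemma nearestIdx_spec {p k : ℕ} (hk : 0 < k) (Cs : Fin k → EuclideanSpace ℝ (Fin p))
    (x : EuclideanSpace ℝ (Fin p)) (m : Fin k) :
    ‖x - Cs (nearestIdx hk Cs x)‖ ≤ ‖x - Cs m‖ := by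
  have h : nearestIdx hk Cs x ∈
      Finset.univ.filter fun j => ∀ m, ‖x - Cs j‖ ≤ ‖x - Cs m‖ := Finset.min'_mem _ _
  exact (Finset.mem_filter.1 h).2 m

lemma nearestIdx_eq_of_lt {p k : ℕ} (hk : 0 < k) (Cs : Fin k → EuclideanSpace ℝ (Fin p))
    (x : EuclideanSpace ℝ (Fin p)) (i : Fin k)
    (h : ∀ m, m ≠ i → ‖x - Cs i‖ < ‖x - Cs m‖) : nearestIdx hk Cs x = i := by
  by_contra hne
  exact absurd (nearestIdx_spec hk Cs x i) (not_le.2 (h _ hne))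

lemma norm_le_sqrt_mul {p : ℕ} (z : EuclideanSpace ℝ (Fin p)) {t : ℝ} (ht : 0 ≤ t)
    (h : ∀ a, |z a| ≤ t) : ‖z‖ ≤ Real.sqrt p * t := by
  rw [EuclideanSpace.norm_eq]
  have h1 : ∑ a, ‖z a‖ ^ 2 ≤ ∑ _a : Fin p, t ^ 2 := by
    apply Finset.sum_le_sum
    intro a _
    rw [Real.norm_eq_abs]
    nlinarith [h a, abs_nonneg (z a)]
  calc Real.sqrt (∑ a, ‖z a‖ ^ 2) ≤ Real.sqrt (∑ _a : Fin p, t ^ 2) := Real.sqrt_le_sqrt h1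
    _ = Real.sqrt (p * t ^ 2) := by rw [Finset.sum_const, Finset.card_univ, Fintype.card_fin,
        nsmul_eq_mul]
    _ = Real.sqrt p * t := by
        rw [Real.sqrt_mul (Nat.cast_nonneg p), Real.sqrt_sq ht]

lemma norm_sq_le_sum {p : ℕ} (z : EuclideanSpace ℝ (Fin p)) :
    ‖z‖ ^ 2 = ∑ a, (z a) ^ 2 := by
  rw [EuclideanSpace.norm_eq, Real.sq_sqrt]
  · simp [Real.norm_eq_abs, sq_abs]
  · positivity

lemma far_eq {p k : ℕ} (hk : 0 < k) (Cs : Fin k → EuclideanSpace ℝ (Fin p))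
    (x y : EuclideanSpace ℝ (Fin p)) (t : ℝ) (hx : x ∉ marginSet Cs t)
    (hd : 2 * ‖y - x‖ ≤ t) : nearestIdx hk Cs y = nearestIdx hk Cs x := by
  set i := nearestIdx hk Cs x with hi
  by_cases he : Nonempty {m : Fin k // m ≠ i}
  · -- margin bound at i
    have hvor : ∀ m, ‖x - Cs i‖ ≤ ‖x - Cs m‖ := nearestIdx_spec hk Cs x
    have hz : t < |zeta Cs i x| := by
      by_contra hle
      exact hx ⟨i, hvor, le_of_not_gt hle⟩
    have hinf_ge : ‖x - Cs i‖ ≤ ⨅ m : {m : Fin k // m ≠ i}, ‖x - Cs m.1‖ :=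
      le_ciInf fun m => hvor m.1
    have hz0 : 0 ≤ zeta Cs i x := by
      simp only [zeta]; linarith
    have hzeta : t < zeta Cs i x := by rwa [abs_of_nonneg hz0] at hz
    apply nearestIdx_eq_of_lt
    intro m hm
    have hinf_le : (⨅ m : {m : Fin k // m ≠ i}, ‖x - Cs m.1‖) ≤ ‖x - Cs m‖ := by
      apply ciInf_le _ (⟨m, hm⟩ : {m : Fin k // m ≠ i})
      refine ⟨0, ?_⟩
      rintro _ ⟨m', rfl⟩
      positivity
    have h1 : ‖y - Cs i‖ ≤ ‖y - x‖ + ‖x - Cs i‖ := by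
      calc ‖y - Cs i‖ = ‖(y - x) + (x - Cs i)‖ := by congr 1; abel
        _ ≤ ‖y - x‖ + ‖x - Cs i‖ := norm_add_le _ _
    have h2 : ‖x - Cs m‖ ≤ ‖y - x‖ + ‖y - Cs m‖ := by
      calc ‖x - Cs m‖ = ‖(x - y) + (y - Cs m)‖ := by congr 1; abel
        _ ≤ ‖x - y‖ + ‖y - Cs m‖ := norm_add_le _ _
        _ = ‖y - x‖ + ‖y - Cs m‖ := by rw [norm_sub_rev]
    have hzv : zeta Cs i x = (⨅ m : {m : Fin k // m ≠ i}, ‖x - Cs m.1‖) - ‖x - Cs i‖ := rfl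
    linarith
  · have : ∀ m : Fin k, m = i := by
      intro m
      by_contra hm
      exact he ⟨⟨m, hm⟩⟩
    exact this _

lemma measurableSet_cond {p k : ℕ} (Cs : Fin k → EuclideanSpace ℝ (Fin p)) (i : Fin k) :
    MeasurableSet {x : EuclideanSpace ℝ (Fin p) | ∀ m, ‖x - Cs i‖ ≤ ‖x - Cs m‖} := by
  have : {x : EuclideanSpace ℝ (Fin p) | ∀ m, ‖x - Cs i‖ ≤ ‖x - Cs m‖} =
      ⋂ m, {x | ‖x - Cs i‖ ≤ ‖x - Cs m‖} := by ext x; simp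
  rw [this]
  exact MeasurableSet.iInter fun m =>
    measurableSet_le ((continuous_id.sub continuous_const).norm.measurable)
      ((continuous_id.sub continuous_const).norm.measurable)

lemma measurable_nearestIdx {p k : ℕ} (hk : 0 < k) (Cs : Fin k → EuclideanSpace ℝ (Fin p)) :
    Measurable (nearestIdx hk Cs) := by
  apply measurable_to_countable'
  intro j
  have heq : (nearestIdx hk Cs) ⁻¹' {j} =
      {x | ∀ m, ‖x - Cs j‖ ≤ ‖x - Cs m‖} ∩
      ⋂ i, {x : EuclideanSpace ℝ (Fin p) | (∀ m, ‖x - Cs i‖ ≤ ‖x - Cs m‖) → j ≤ i} := by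
    ext x
    simp only [Set.mem_preimage, Set.mem_singleton_iff, Set.mem_inter_iff, Set.mem_iInter,
      Set.mem_setOf_eq]
    constructor
    · rintro rfl
      constructor
      · intro m
        have h : nearestIdx hk Cs x ∈
            Finset.univ.filter fun j => ∀ m, ‖x - Cs j‖ ≤ ‖x - Cs m‖ := Finset.min'_mem _ _
        exact (Finset.mem_filter.1 h).2 m
      · intro i hi
        exact Finset.min'_le _ _ (Finset.mem_filter.2 ⟨Finset.mem_univ _, hi⟩)
    · rintro ⟨h1, h2⟩
      apply le_antisymm
      · exact Finset.min'_le _ _ (Finset.mem_filter.2 ⟨Finset.mem_univ _, h1⟩)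
      · have h : nearestIdx hk Cs x ∈
            Finset.univ.filter fun j => ∀ m, ‖x - Cs j‖ ≤ ‖x - Cs m‖ := Finset.min'_mem _ _
        exact h2 _ (Finset.mem_filter.1 h).2
  rw [heq]
  refine (measurableSet_cond Cs j).inter (MeasurableSet.iInter fun i => ?_)
  by_cases hji : j ≤ i
  · have : {x : EuclideanSpace ℝ (Fin p) | (∀ m, ‖x - Cs i‖ ≤ ‖x - Cs m‖) → j ≤ i} =
        Set.univ := by ext x; simp [hji]
    rw [this]; exact MeasurableSet.univ
  · have : {x : EuclideanSpace ℝ (Fin p) | (∀ m, ‖x - Cs i‖ ≤ ‖x - Cs m‖) → j ≤ i} =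
        {x | ∀ m, ‖x - Cs i‖ ≤ ‖x - Cs m‖}ᶜ := by
      ext x; simp [hji]
    rw [this]; exact (measurableSet_cond Cs i).compl

lemma continuous_zeta {p k : ℕ} (Cs : Fin k → EuclideanSpace ℝ (Fin p)) (j : Fin k) :
    Continuous (zeta Cs j) := by
  have h2 : Continuous fun x : EuclideanSpace ℝ (Fin p) => ‖x - Cs j‖ :=
    (continuous_id.sub continuous_const).norm
  apply Continuous.sub _ h2
  by_cases he : Nonempty {i : Fin k // i ≠ j}
  · have hne : (Finset.univ : Finset {i : Fin k // i ≠ j}).Nonempty := Finset.univ_nonempty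
    have : (fun x : EuclideanSpace ℝ (Fin p) => ⨅ i : {i : Fin k // i ≠ j}, ‖x - Cs i.1‖) =
        fun x => Finset.univ.inf' hne (fun i : {i : Fin k // i ≠ j} => ‖x - Cs i.1‖) := by
      funext x
      exact (Finset.inf'_univ_eq_ciInf _).symm
    rw [this]
    rw [continuous_iff_continuousAt]
    intro x
    exact ContinuousAt.finset_inf'_apply hne fun i _ =>
      ((continuous_id.sub continuous_const).norm.continuousAt)
  · have he' : IsEmpty {i : Fin k // i ≠ j} := not_nonempty_iff.1 he
    have : (fun x : EuclideanSpace ℝ (Fin p) => ⨅ i : {i : Fin k // i ≠ j}, ‖x - Cs i.1‖) =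
        fun _ => 0 := by
      funext x
      haveI := he'; exact Real.iInf_of_isEmpty _
    rw [this]; exact continuous_const

lemma measurableSet_marginSet {p k : ℕ} (Cs : Fin k → EuclideanSpace ℝ (Fin p)) (t : ℝ) :
    MeasurableSet (marginSet Cs t) := by
  have : marginSet Cs t = ⋃ j, ({x : EuclideanSpace ℝ (Fin p) | ∀ i, ‖x - Cs j‖ ≤ ‖x - Cs i‖} ∩
      {x | |zeta Cs j x| ≤ t}) := by
    ext x; simp [marginSet, Set.mem_iUnion, Set.mem_setOf_eq]
  rw [this]
  refine MeasurableSet.iUnion fun j => MeasurableSet.inter ?_ ?_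
  · have : {x : EuclideanSpace ℝ (Fin p) | ∀ i, ‖x - Cs j‖ ≤ ‖x - Cs i‖} =
        ⋂ i, {x | ‖x - Cs j‖ ≤ ‖x - Cs i‖} := by ext x; simp
    rw [this]
    exact MeasurableSet.iInter fun m =>
      measurableSet_le ((continuous_id.sub continuous_const).norm.measurable)
        ((continuous_id.sub continuous_const).norm.measurable)
  · exact measurableSet_le (continuous_zeta Cs j).abs.measurable measurable_const

set_option maxHeartbeats 2000000 in
/-- Under the margin condition, the expected excess squared distance from
selecting the nearest center according to `μ̂` instead of `μ` satisfies
`0 ≤ E[‖μ − c*_{d̂}‖₂² − ‖μ − c*_d‖₂²] ≤ c·( max_a ‖μ̂_a − μ_a‖_∞^{α+1} +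
κ⁻¹·max_a (‖μ̂_a − μ_a‖_∞·E|μ̂_a − μ_a|) )` with `c` depending only on `B, k, p, α, L`. -/
theorem stmt_12 (B : ℝ) (hB : 0 < B) (k p : ℕ) (hk : 0 < k) (α L : ℝ)
    (hα : 0 < α) (hL : 0 < L) :
    ∃ c : ℝ, 0 ≤ c ∧
      ∀ (Ω : Type) (m0 : MeasurableSpace Ω) (P : Measure Ω), IsProbabilityMeasure P →
      ∀ μv μh : Ω → EuclideanSpace ℝ (Fin p),
        (∀ a, Measurable fun ω => μv ω a) → (∀ a, Measurable fun ω => μh ω a) →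
        (∀ a, ∀ᵐ ω ∂P, |μv ω a| ≤ B) → (∀ a, ∀ᵐ ω ∂P, |μh ω a| ≤ B) →
      ∀ Cs : Fin k → EuclideanSpace ℝ (Fin p), (∀ j a, |Cs j a| ≤ B) →
      ∀ κ : ℝ, 0 < κ →
      (∀ t : ℝ, 0 ≤ t → t ≤ κ →
        P {ω | μv ω ∈ marginSet Cs t} ≤ ENNReal.ofReal (L * t ^ α)) →
      (0 ≤ ∫ ω, (‖μv ω - Cs (nearestIdx hk Cs (μh ω))‖ ^ 2 -
              ‖μv ω - Cs (nearestIdx hk Cs (μv ω))‖ ^ 2) ∂P) ∧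
      ∫ ω, (‖μv ω - Cs (nearestIdx hk Cs (μh ω))‖ ^ 2 -
              ‖μv ω - Cs (nearestIdx hk Cs (μv ω))‖ ^ 2) ∂P ≤
        c * ((⨆ a : Fin p, (linf P fun ω => μh ω a - μv ω a) ^ (α + 1)) +
          κ⁻¹ * ⨆ a : Fin p,
            (linf P fun ω => μh ω a - μv ω a) * ∫ ω, |μh ω a - μv ω a| ∂P) := by
  classical
  set sp := Real.sqrt p with hsp
  have hsp0 : 0 ≤ sp := Real.sqrt_nonneg _
  have hspsq : sp * sp = (p : ℝ) := Real.mul_self_sqrt (Nat.cast_nonneg p)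
  set c1 := 8*B*(p:ℝ)*L*(2*sp)^α with hc1
  set c2 := 16*B*sp*(p:ℝ) with hc2
  have hc10 : 0 ≤ c1 := by positivity
  have hc20 : 0 ≤ c2 := by positivity
  refine ⟨c1 + c2, by positivity, ?_⟩
  intro Ω m0 P hP μv μh hμv hμh hμvB hμhB Cs hCs κ hκ hmargin
  haveI := hP
  -- nonnegativity of the integrand
  have hg_nonneg : ∀ ω, 0 ≤ ‖μv ω - Cs (nearestIdx hk Cs (μh ω))‖ ^ 2 -
      ‖μv ω - Cs (nearestIdx hk Cs (μv ω))‖ ^ 2 := by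
    intro ω
    have h := nearestIdx_spec hk Cs (μv ω) (nearestIdx hk Cs (μh ω))
    nlinarith [norm_nonneg (μv ω - Cs (nearestIdx hk Cs (μv ω)))]
  refine ⟨integral_nonneg hg_nonneg, ?_⟩
  rcases Nat.eq_zero_or_pos p with hp | hp
  · subst hp
    have hz : ∀ z : EuclideanSpace ℝ (Fin 0), ‖z‖ = 0 := by
      intro z; rw [EuclideanSpace.norm_eq]; simp
    have h0 : (fun ω => ‖μv ω - Cs (nearestIdx hk Cs (μh ω))‖ ^ 2 -
        ‖μv ω - Cs (nearestIdx hk Cs (μv ω))‖ ^ 2) = fun _ => (0:ℝ) := by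
      funext ω; rw [hz, hz]; ring
    rw [h0, integral_zero, Real.iSup_of_isEmpty, Real.iSup_of_isEmpty]
    simp
  haveI : Nonempty (Fin p) := Fin.pos_iff_nonempty.1 hp
  haveI : (MeasureTheory.ae P).NeBot := ae_neBot.2 (IsProbabilityMeasure.ne_zero P)
  set dl : Fin p → ℝ := fun a => linf P fun ω => μh ω a - μv ω a with hdl
  set Ea : Fin p → ℝ := fun a => ∫ ω, |μh ω a - μv ω a| ∂P with hEa
  set ε := ⨆ a, dl a with hε
  set S := ⨆ a, dl a * Ea a with hS
  -- a.e. bounds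
  have hbd : ∀ a : Fin p, ∀ᵐ ω ∂P, |μh ω a - μv ω a| ≤ 2*B := by
    intro a
    filter_upwards [hμvB a, hμhB a] with ω h1 h2
    have h3 := abs_sub (μh ω a) (μv ω a)
    linarith
  have hbdd : ∀ a, Filter.IsBoundedUnder (· ≤ ·) (MeasureTheory.ae P)
      fun ω => |μh ω a - μv ω a| := fun a => ⟨2*B, Filter.eventually_map.2 (hbd a)⟩
  have hdl_ae : ∀ᵐ ω ∂P, ∀ a, |μh ω a - μv ω a| ≤ dl a := by
    rw [ae_all_iff]
    intro a
    exact ae_le_essSup (hbdd a)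
  have hdl0 : ∀ a, 0 ≤ dl a := fun a =>
    Filter.le_limsup_of_frequently_le
      ((Filter.Eventually.of_forall fun ω => abs_nonneg _).frequently) (hbdd a)
  have hbddR : BddAbove (Set.range dl) := Set.Finite.bddAbove (Set.finite_range _)
  have hdlε : ∀ a, dl a ≤ ε := fun a => le_ciSup hbddR a
  have hε0 : 0 ≤ ε := le_trans (hdl0 (Classical.arbitrary _)) (hdlε _)
  -- measurability
  have hμv_m : Measurable μv := by exact (WithLp.measurable_toLp 2 (Fin p → ℝ)).comp (measurable_pi_iff.2 hμv)
  have hμh_m : Measurable μh := by exact (WithLp.measurable_toLp 2 (Fin p → ℝ)).comp (measurable_pi_iff.2 hμh)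
  have hn : Measurable (nearestIdx hk Cs) := measurable_nearestIdx hk Cs
  have hCs_m : Measurable Cs := measurable_from_top
  have hnorm1 : Measurable fun ω => ‖μv ω - Cs (nearestIdx hk Cs (μh ω))‖ :=
    (hμv_m.sub (hCs_m.comp (hn.comp hμh_m))).norm
  have hnorm2 : Measurable fun ω => ‖μv ω - Cs (nearestIdx hk Cs (μv ω))‖ :=
    (hμv_m.sub (hCs_m.comp (hn.comp hμv_m))).norm
  have hg_m : Measurable fun ω => ‖μv ω - Cs (nearestIdx hk Cs (μh ω))‖ ^ 2 -
      ‖μv ω - Cs (nearestIdx hk Cs (μv ω))‖ ^ 2 :=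
    (hnorm1.pow_const 2).sub (hnorm2.pow_const 2)
  have hμvB' : ∀ᵐ ω ∂P, ∀ a, |μv ω a| ≤ B := ae_all_iff.2 hμvB
  have hμhB' : ∀ᵐ ω ∂P, ∀ a, |μh ω a| ≤ B := ae_all_iff.2 hμhB
  -- norm bounds
  have hXc : ∀ (x : EuclideanSpace ℝ (Fin p)), (∀ a, |x a| ≤ B) → ∀ j : Fin k,
      ‖x - Cs j‖ ≤ sp * (2*B) := by
    intro x hx j
    apply norm_le_sqrt_mul _ (by positivity)
    intro a
    have h1 := hx a
    have h2 := hCs j a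
    have h3 : (x - Cs j) a = x a - Cs j a := by simp
    rw [h3]
    have := abs_sub (x a) (Cs j a)
    linarith
  -- integrability of the integrand
  have hg_int : Integrable (fun ω => ‖μv ω - Cs (nearestIdx hk Cs (μh ω))‖ ^ 2 -
      ‖μv ω - Cs (nearestIdx hk Cs (μv ω))‖ ^ 2) P := by
    apply (integrable_const (8*(p:ℝ)*B^2)).mono' hg_m.aestronglyMeasurable
    filter_upwards [hμvB'] with ω hω
    have h1 := hXc (μv ω) hω (nearestIdx hk Cs (μh ω))
    have h2 := hXc (μv ω) hω (nearestIdx hk Cs (μv ω))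
    have h3 := norm_nonneg (μv ω - Cs (nearestIdx hk Cs (μh ω)))
    have h4 := norm_nonneg (μv ω - Cs (nearestIdx hk Cs (μv ω)))
    rw [Real.norm_eq_abs, abs_le]
    constructor <;> nlinarith [hspsq]
  -- the margin event
  set t₀ := min κ (2*(sp*ε)) with ht₀
  have ht₀0 : 0 ≤ t₀ := le_min hκ.le (by positivity)
  set A := {ω | μv ω ∈ marginSet Cs t₀} with hA
  have hA_m : MeasurableSet A := hμv_m (measurableSet_marginSet Cs t₀)
  -- key pointwise bound
  have key : ∀ᵐ ω ∂P, ‖μv ω - Cs (nearestIdx hk Cs (μh ω))‖ ^ 2 -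
      ‖μv ω - Cs (nearestIdx hk Cs (μv ω))‖ ^ 2 ≤
      (8*B*(p:ℝ)*ε) * A.indicator (fun _ => (1:ℝ)) ω +
      (16*B*sp/κ) * ∑ a, dl a * |μh ω a - μv ω a| := by
    filter_upwards [hμvB', hμhB', hdl_ae] with ω hv hh hd
    have hsum_nn : 0 ≤ ∑ a, dl a * |μh ω a - μv ω a| :=
      Finset.sum_nonneg fun a _ => mul_nonneg (hdl0 a) (abs_nonneg _)
    have h2c_nn : 0 ≤ 16*B*sp/κ := by positivity
    have hnn2 : 0 ≤ (16*B*sp/κ) * ∑ a, dl a * |μh ω a - μv ω a| :=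
      mul_nonneg h2c_nn hsum_nn
    have hδcoord : ∀ a, |(μh ω - μv ω) a| ≤ ε := by
      intro a
      have h3 : (μh ω - μv ω) a = μh ω a - μv ω a := by simp
      rw [h3]
      exact le_trans (hd a) (hdlε a)
    have hδnorm : ‖μh ω - μv ω‖ ≤ sp * ε := norm_le_sqrt_mul _ hε0 hδcoord
    have ha := hXc (μv ω) hv (nearestIdx hk Cs (μh ω))
    have hb := hXc (μv ω) hv (nearestIdx hk Cs (μv ω))
    have hba := nearestIdx_spec hk Cs (μv ω) (nearestIdx hk Cs (μh ω))
    -- triangle chain: a ≤ b + 2‖δ‖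
    have t1 : ‖μv ω - Cs (nearestIdx hk Cs (μh ω))‖ ≤
        ‖μv ω - μh ω‖ + ‖μh ω - Cs (nearestIdx hk Cs (μh ω))‖ := by
      calc ‖μv ω - Cs (nearestIdx hk Cs (μh ω))‖
          = ‖(μv ω - μh ω) + (μh ω - Cs (nearestIdx hk Cs (μh ω)))‖ := by congr 1; abel
        _ ≤ _ := norm_add_le _ _
    have t2 : ‖μh ω - Cs (nearestIdx hk Cs (μh ω))‖ ≤
        ‖μh ω - Cs (nearestIdx hk Cs (μv ω))‖ :=
      nearestIdx_spec hk Cs (μh ω) _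
    have t3 : ‖μh ω - Cs (nearestIdx hk Cs (μv ω))‖ ≤
        ‖μh ω - μv ω‖ + ‖μv ω - Cs (nearestIdx hk Cs (μv ω))‖ := by
      calc ‖μh ω - Cs (nearestIdx hk Cs (μv ω))‖
          = ‖(μh ω - μv ω) + (μv ω - Cs (nearestIdx hk Cs (μv ω)))‖ := by congr 1; abel
        _ ≤ _ := norm_add_le _ _
    have t4 : ‖μv ω - μh ω‖ = ‖μh ω - μv ω‖ := norm_sub_rev _ _
    have hdiff : ‖μv ω - Cs (nearestIdx hk Cs (μh ω))‖ -
        ‖μv ω - Cs (nearestIdx hk Cs (μv ω))‖ ≤ 2 * ‖μh ω - μv ω‖ := by linarith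
    have hsum4B : ‖μv ω - Cs (nearestIdx hk Cs (μh ω))‖ +
        ‖μv ω - Cs (nearestIdx hk Cs (μv ω))‖ ≤ 4*B*sp := by linarith
    by_cases hmem : ω ∈ A
    · rw [Set.indicator_of_mem hmem]
      have hdiff2 : ‖μv ω - Cs (nearestIdx hk Cs (μh ω))‖ -
          ‖μv ω - Cs (nearestIdx hk Cs (μv ω))‖ ≤ 2*(sp*ε) := by linarith
      have hprod : (‖μv ω - Cs (nearestIdx hk Cs (μh ω))‖ +
          ‖μv ω - Cs (nearestIdx hk Cs (μv ω))‖) *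
          (‖μv ω - Cs (nearestIdx hk Cs (μh ω))‖ -
          ‖μv ω - Cs (nearestIdx hk Cs (μv ω))‖) ≤ (4*B*sp) * (2*(sp*ε)) :=
        mul_le_mul hsum4B hdiff2 (by linarith) (by positivity)
      rw [show (4*B*sp)*(2*(sp*ε)) = 8*B*(sp*sp)*ε by ring, hspsq] at hprod
      have : ‖μv ω - Cs (nearestIdx hk Cs (μh ω))‖ ^ 2 -
          ‖μv ω - Cs (nearestIdx hk Cs (μv ω))‖ ^ 2 ≤ 8*B*(p:ℝ)*ε := by
        nlinarith [hprod]
      linarith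
    · rw [Set.indicator_of_notMem hmem]
      have hmem' : μv ω ∉ marginSet Cs t₀ := hmem
      by_cases hfar : 2 * ‖μh ω - μv ω‖ ≤ t₀
      · have heq : nearestIdx hk Cs (μh ω) = nearestIdx hk Cs (μv ω) :=
          far_eq hk Cs (μv ω) (μh ω) t₀ hmem' hfar
        rw [heq]
        simp only [sub_self, mul_zero, zero_add]
        linarith
      · have hκlt : κ < 2 * ‖μh ω - μv ω‖ := by
          have h2 : 2*‖μh ω - μv ω‖ ≤ 2*(sp*ε) := by linarith
          rcases le_total κ (2*(sp*ε)) with hc | hc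
          · rw [ht₀, min_eq_left hc] at hfar; linarith [not_le.1 hfar]
          · rw [ht₀, min_eq_right hc] at hfar; linarith [not_le.1 hfar]
        have hprod : (‖μv ω - Cs (nearestIdx hk Cs (μh ω))‖ +
            ‖μv ω - Cs (nearestIdx hk Cs (μv ω))‖) *
            (‖μv ω - Cs (nearestIdx hk Cs (μh ω))‖ -
            ‖μv ω - Cs (nearestIdx hk Cs (μv ω))‖) ≤ (4*B*sp) * (2*‖μh ω - μv ω‖) :=
          mul_le_mul hsum4B hdiff (by linarith) (by positivity)
        have e0 : ‖μv ω - Cs (nearestIdx hk Cs (μh ω))‖ ^ 2 -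
            ‖μv ω - Cs (nearestIdx hk Cs (μv ω))‖ ^ 2 ≤ 8*B*sp*‖μh ω - μv ω‖ := by
          nlinarith [hprod]
        have hfrac : (1:ℝ) ≤ 2*‖μh ω - μv ω‖/κ := by
          rw [le_div_iff₀ hκ]; linarith
        have e1 : 8*B*sp*‖μh ω - μv ω‖ ≤ 8*B*sp*‖μh ω - μv ω‖ * (2*‖μh ω - μv ω‖/κ) :=
          le_mul_of_one_le_right (by positivity) hfrac
        have e2 : 8*B*sp*‖μh ω - μv ω‖ * (2*‖μh ω - μv ω‖/κ) =
            (16*B*sp/κ) * (‖μh ω - μv ω‖^2) := by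
          field_simp; ring
        have e3 : ‖μh ω - μv ω‖^2 = ∑ a, (μh ω a - μv ω a)^2 := by
          rw [norm_sq_le_sum]
          apply Finset.sum_congr rfl
          intro a _
          simp
        have e4 : ∑ a, (μh ω a - μv ω a)^2 ≤ ∑ a, dl a * |μh ω a - μv ω a| := by
          apply Finset.sum_le_sum
          intro a _
          nlinarith [hd a, abs_nonneg (μh ω a - μv ω a), sq_abs (μh ω a - μv ω a)]
        have : (16*B*sp/κ) * (‖μh ω - μv ω‖^2) ≤
            (16*B*sp/κ) * ∑ a, dl a * |μh ω a - μv ω a| := by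
          rw [e3]
          exact mul_le_mul_of_nonneg_left e4 h2c_nn
        linarith
  -- integrability of the bounding function
  have hind_int : Integrable (fun ω => (8*B*(p:ℝ)*ε) * A.indicator (fun _ => (1:ℝ)) ω) P :=
    ((integrable_const (1:ℝ)).indicator hA_m).const_mul _
  have habs_int : ∀ a : Fin p, Integrable (fun ω => |μh ω a - μv ω a|) P := by
    intro a
    apply (integrable_const (2*B)).mono' (((hμh a).sub (hμv a)).abs).aestronglyMeasurable
    filter_upwards [hbd a] with ω h
    rwa [Real.norm_eq_abs, abs_abs]
  have hsum_int : Integrable (fun ω => (16*B*sp/κ) * ∑ a, dl a * |μh ω a - μv ω a|) P :=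
    (integrable_finset_sum _ fun a _ => ((habs_int a).const_mul (dl a))).const_mul _
  have hint_le : ∫ ω, (‖μv ω - Cs (nearestIdx hk Cs (μh ω))‖ ^ 2 -
      ‖μv ω - Cs (nearestIdx hk Cs (μv ω))‖ ^ 2) ∂P ≤
      ∫ ω, ((8*B*(p:ℝ)*ε) * A.indicator (fun _ => (1:ℝ)) ω +
        (16*B*sp/κ) * ∑ a, dl a * |μh ω a - μv ω a|) ∂P :=
    integral_mono_ae hg_int (hind_int.add hsum_int) key
  rw [integral_add hind_int hsum_int, integral_const_mul, integral_const_mul,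
    integral_finset_sum _ (fun a _ => (habs_int a).const_mul (dl a))] at hint_le
  have hind_val : ∫ ω, A.indicator (fun _ => (1:ℝ)) ω ∂P = (P A).toReal := by
    rw [integral_indicator hA_m]
    simp
    rfl
  have hEa_val : ∀ a : Fin p, ∫ ω, dl a * |μh ω a - μv ω a| ∂P = dl a * Ea a :=
    fun a => integral_const_mul _ _
  rw [hind_val] at hint_le
  simp only [hEa_val] at hint_le
  -- probability bound
  have hPA : (P A).toReal ≤ L * t₀ ^ α :=
    ENNReal.toReal_le_of_le_ofReal (by positivity) (hmargin t₀ ht₀0 (min_le_left _ _))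
  -- term 1
  have hT1 : (8*B*(p:ℝ)*ε) * (P A).toReal ≤ c1 * ⨆ a, dl a ^ (α+1) := by
    have ht₀le : t₀ ≤ (2*sp)*ε := by
      have := min_le_right κ (2*(sp*ε)); linarith
    have h1 : t₀ ^ α ≤ (2*sp)^α * ε^α := by
      rw [← Real.mul_rpow (by positivity) hε0]
      exact Real.rpow_le_rpow ht₀0 ht₀le hα.le
    obtain ⟨a₀, ha₀⟩ : ∃ a₀, dl a₀ = ⨆ a, dl a := exists_eq_ciSup_of_finite (f := dl)
    have h5 : ε ^ (α+1) ≤ ⨆ a, dl a ^ (α+1) := by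
      rw [hε, ← ha₀]
      exact le_ciSup (f := fun a => dl a ^ (α+1))
        (Set.Finite.bddAbove (Set.finite_range _)) a₀
    have h6 : ε ^ (α+1) = ε^α * ε := by
      rw [Real.rpow_add' hε0 (by linarith : α+1 ≠ 0), Real.rpow_one]
    calc (8*B*(p:ℝ)*ε) * (P A).toReal ≤ (8*B*(p:ℝ)*ε) * (L * t₀^α) :=
        mul_le_mul_of_nonneg_left hPA (by positivity)
      _ ≤ (8*B*(p:ℝ)*ε) * (L * ((2*sp)^α * ε^α)) := by
          apply mul_le_mul_of_nonneg_left _ (by positivity)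
          exact mul_le_mul_of_nonneg_left h1 hL.le
      _ = c1 * (ε^α * ε) := by rw [hc1]; ring
      _ = c1 * ε^(α+1) := by rw [h6]
      _ ≤ c1 * ⨆ a, dl a ^ (α+1) := mul_le_mul_of_nonneg_left h5 hc10
  -- term 2
  have hT2 : (16*B*sp/κ) * ∑ a, dl a * Ea a ≤ c2 * (κ⁻¹ * S) := by
    have hsumS : ∑ a, dl a * Ea a ≤ (p:ℝ) * S := by
      calc ∑ a, dl a * Ea a ≤ ∑ _a : Fin p, S :=
          Finset.sum_le_sum fun a _ =>
            le_ciSup (f := fun a => dl a * Ea a)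
              (Set.Finite.bddAbove (Set.finite_range _)) a
        _ = (p:ℝ) * S := by
            rw [Finset.sum_const, Finset.card_univ, Fintype.card_fin, nsmul_eq_mul]
    calc (16*B*sp/κ) * ∑ a, dl a * Ea a ≤ (16*B*sp/κ) * ((p:ℝ)*S) :=
        mul_le_mul_of_nonneg_left hsumS (by positivity)
      _ = c2 * (κ⁻¹ * S) := by rw [hc2]; field_simp
  have hsup1_0 : 0 ≤ ⨆ a, dl a ^ (α+1) := by
    refine le_trans (Real.rpow_nonneg (hdl0 (Classical.arbitrary _)) (α+1)) ?_
    exact le_ciSup (f := fun a => dl a ^ (α+1))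
      (Set.Finite.bddAbove (Set.finite_range _)) _
  have hEa0 : ∀ a, 0 ≤ Ea a := fun a => integral_nonneg fun ω => abs_nonneg _
  have hS0 : 0 ≤ S := by
    refine le_trans (mul_nonneg (hdl0 (Classical.arbitrary _))
      (hEa0 (Classical.arbitrary _))) ?_
    exact le_ciSup (f := fun a => dl a * Ea a)
      (Set.Finite.bddAbove (Set.finite_range _)) (Classical.arbitrary _)
  have hκS : 0 ≤ κ⁻¹ * S := mul_nonneg (inv_nonneg.2 hκ.le) hS0
  show _ ≤ (c1 + c2) * ((⨆ a, dl a ^ (α+1)) + κ⁻¹ * S)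
  nlinarith [hint_le, hT1, hT2, mul_nonneg hc10 hκS, mul_nonneg hc20 hsup1_0]
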